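/- Let k ≥ 2 and n_1, …, n_k ≥ 1 with n_i ≥ 2 for at least one i. Then every edge-labeled tree (T, λ) whose undirected Fitch graph is isomorphic to the complete multipartite graph K_{n_1,…,n_k} has at least (n_1 + ⋯ + n_k) + |{ i : n_i ≥ 2 }| vertices. -/

import Mathlib

open SimpleGraph

/-- A leaf of a graph is a vertex with exactly one neighbour (i.e. a vertex of degree 1). -/
def SimpleGraph.IsLeaf {V : Type*} (T : SimpleGraph V) (v : V) : Prop :=
  ∃! u, T.Adj v u

/-- The undirected Fitch graph explained by an edge-labelled tree `(T, lam)`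
(labels: `true` = 1, `false` = 0): its vertices are the leaves of `T`, and two
distinct leaves are adjacent iff the (unique) path between them in `T` contains
at least one edge labelled `1`. -/
def fitchGraph {V : Type*} (T : SimpleGraph V) (lam : Sym2 V → Bool) :
    SimpleGraph {v : V // T.IsLeaf v} where
  Adj x y := x ≠ y ∧ ∃ p : T.Walk x.1 y.1, p.IsPath ∧ ∃ e ∈ p.edges, lam e = true
  symm := by
    constructor
    rintro x y ⟨hxy, p, hp, e, he, hl⟩
    exact ⟨hxy.symm, p.reverse, hp.reverse, e, by
      rw [SimpleGraph.Walk.edges_reverse]; exact List.mem_reverse.mpr he, hl⟩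
  loopless := by constructor; rintro x ⟨hx, -⟩; exact hx rfl

/-- A graph is an undirected Fitch graph if it is isomorphic to the Fitch graph
explained by some edge-labelled finite tree. -/
def IsFitchGraph {W : Type*} (G : SimpleGraph W) : Prop :=
  ∃ (V : Type) (T : SimpleGraph V) (lam : Sym2 V → Bool),
    Finite V ∧ T.IsTree ∧ Nonempty (G ≃g fitchGraph T lam)

/-- The first edge of a nontrivial walk. -/
private lemma first_edge_aux {V : Type*} {T : SimpleGraph V} {x y : V} (hxy : x ≠ y)
    (p : T.Walk x y) : ∃ w, T.Adj x w ∧ s(x, w) ∈ p.edges := by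
  cases p with
  | nil => exact absurd rfl hxy
  | cons h q =>
    exact ⟨_, h, by rw [SimpleGraph.Walk.edges_cons]; exact List.mem_cons_self⟩

/-- If two adjacent vertices of a connected graph are both leaves, they are the only
vertices. -/
private lemma leaf_adj_leaf_aux {V : Type*} {T : SimpleGraph V} (hc : T.Connected)
    {x w : V} (hx : T.IsLeaf x) (hw : T.IsLeaf w) (hxw : T.Adj x w) (v : V) :
    v = x ∨ v = w := by
  classical
  obtain ⟨q⟩ := hc.preconnected x v
  obtain ⟨p, hp⟩ := q.toPath
  cases p with
  | nil => exact Or.inl rfl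
  | @cons _ y _ h q =>
    obtain ⟨u, -, hu⟩ := hx
    have hyw : y = w := (hu y h).trans (hu w hxw).symm
    subst hyw
    cases q with
    | nil => exact Or.inr rfl
    | @cons _ z _ h' q' =>
      obtain ⟨u', -, hu'⟩ := hw
      have hzx : z = x := (hu' z h').trans (hu' x hxw.symm).symm
      exfalso
      rw [SimpleGraph.Walk.cons_isPath_iff] at hp
      exact hp.2 (by
        rw [SimpleGraph.Walk.support_cons]
        exact List.mem_cons_of_mem _ (hzx ▸ q'.start_mem_support))

/-- for `k ≥ 2` and `n₁, …, n_k ≥ 1` with `n_i ≥ 2` for at least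
one `i`, every edge-labelled tree `(T, lam)` whose Fitch graph is isomorphic to
the complete multipartite graph `K_{n₁,…,n_k}` has at least
`(n₁ + ⋯ + n_k) + #{i : n_i ≥ 2}` vertices. -/
theorem min_tree_size_lower_bound (k : ℕ) (hk : 2 ≤ k) (n : Fin k → ℕ)
    (hn : ∀ i, 1 ≤ n i) (hn2 : ∃ i, 2 ≤ n i)
    {V : Type*} [Fintype V] (T : SimpleGraph V) (hT : T.IsTree)
    (lam : Sym2 V → Bool)
    (hiso : Nonempty (fitchGraph T lam ≃g
      completeMultipartiteGraph (fun i : Fin k => Fin (n i)))) :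
    (∑ i, n i) + (Finset.univ.filter fun i : Fin k => 2 ≤ n i).card ≤
      Fintype.card V := by
  classical
  obtain ⟨φ⟩ := hiso
  have hφadj : ∀ x y : Σ i, Fin (n i),
      (fitchGraph T lam).Adj (φ.symm x) (φ.symm y) ↔ x.1 ≠ y.1 := by
    intro x y
    rw [φ.symm.map_adj_iff]
    simp [completeMultipartiteGraph]
  set a : Fin k → {v // T.IsLeaf v} := fun i => φ.symm ⟨i, ⟨0, hn i⟩⟩ with ha
  have hane : ∀ i j : Fin k, i ≠ j → a i ≠ a j := by
    intro i j hij h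
    exact hij (congrArg Sigma.fst (φ.symm.injective h))
  have key : ∀ i : Fin k, 2 ≤ n i →
      ∃ w : V, ¬ T.IsLeaf w ∧ T.Adj (a i).1 w ∧ lam s((a i).1, w) = false := by
    intro i hi
    set bi : {v // T.IsLeaf v} := φ.symm ⟨i, ⟨1, hi⟩⟩ with hbi
    have hab : a i ≠ bi := by
      intro h
      have := φ.symm.injective h
      rw [Sigma.ext_iff] at this
      have h2 := eq_of_heq this.2
      rw [Fin.ext_iff] at h2
      simp at h2
    have habv : (a i).1 ≠ bi.1 := fun h => hab (Subtype.ext h)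
    have hnadj : ¬ (fitchGraph T lam).Adj (a i) bi := by
      rw [hφadj]; simp
    have hall : ∀ (p : T.Walk (a i).1 bi.1), p.IsPath → ∀ e ∈ p.edges, lam e = false := by
      intro p hp e he
      by_contra hlt
      exact hnadj ⟨hab, p, hp, e, he, by simpa using hlt⟩
    obtain ⟨q⟩ := hT.isConnected.preconnected (a i).1 bi.1
    obtain ⟨p, hp⟩ := q.toPath
    obtain ⟨w, hadj, hmem⟩ := first_edge_aux habv p
    refine ⟨w, ?_, hadj, hall p hp _ hmem⟩
    intro hw
    obtain ⟨j, hj⟩ := Fintype.exists_ne_of_one_lt_card (by simpa using by omega : 1 < Fintype.card (Fin k)) i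
    have hbj : bi ≠ a j := by
      intro h
      have := φ.symm.injective h
      exact hj (congrArg Sigma.fst this).symm
    have h1 := leaf_adj_leaf_aux hT.isConnected (a i).2 hw hadj bi.1
    have h2 := leaf_adj_leaf_aux hT.isConnected (a i).2 hw hadj (a j).1
    rcases h1 with h1 | h1
    · exact habv h1.symm
    rcases h2 with h2 | h2
    · exact hane j i hj (Subtype.ext h2)
    exact hbj (Subtype.ext (h1.trans h2.symm))
  choose w hwleaf hwadj hwlam using fun s : {i : Fin k // 2 ≤ n i} => key s.1 s.2
  have winj : Function.Injective w := by
    intro s t h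
    by_contra hst
    have hij : s.1 ≠ t.1 := fun h' => hst (Subtype.ext h')
    have hadjst : (fitchGraph T lam).Adj (a s.1) (a t.1) := by
      rw [ha, hφadj]; exact hij
    obtain ⟨hne, p', hp', e, he, hl⟩ := hadjst
    have hadj2 : T.Adj (w s) (a t.1).1 := by rw [h]; exact (hwadj t).symm
    set pc : T.Walk (a s.1).1 (a t.1).1 :=
      SimpleGraph.Walk.cons (hwadj s) (SimpleGraph.Walk.cons hadj2 SimpleGraph.Walk.nil) with hpcdef
    have hnev : (a s.1).1 ≠ (a t.1).1 := fun hv => hne (Subtype.ext hv)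
    have hwsat : w s ≠ (a (t : Fin k)).1 := fun hv => hwleaf s (by rw [hv]; exact (a (t : Fin k)).2)
    have hpc : pc.IsPath := by
      rw [hpcdef]
      refine (SimpleGraph.Walk.IsPath.nil.cons ?_).cons ?_
      · simpa using hwsat
      · simp only [SimpleGraph.Walk.support_cons, SimpleGraph.Walk.support_nil,
          List.mem_cons, List.mem_singleton, List.not_mem_nil, or_false]
        push_neg
        exact ⟨(hwadj s).ne, hnev⟩
    have hpeq : p' = pc := by
      obtain ⟨u, -, hu⟩ := hT.existsUnique_path (a s.1).1 (a t.1).1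
      exact (hu p' hp').trans (hu pc hpc).symm
    rw [hpeq, hpcdef] at he
    simp only [SimpleGraph.Walk.edges_cons, SimpleGraph.Walk.edges_nil, List.mem_cons,
      List.mem_singleton, List.not_mem_nil, or_false] at he
    rcases he with he | he
    · rw [he] at hl
      rw [hwlam s] at hl
      exact Bool.false_ne_true hl
    · rw [he] at hl
      have : s(w s, (a t.1).1) = s((a t.1).1, w t) := by rw [h, Sym2.eq_swap]
      rw [this, hwlam t] at hl
      exact Bool.false_ne_true hl
  let f : ({v // T.IsLeaf v} ⊕ {i : Fin k // 2 ≤ n i}) → V :=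
    Sum.elim Subtype.val w
  have hf : Function.Injective f := by
    rintro (x | s) (y | t) h <;>
      simp only [f, Sum.elim_inl, Sum.elim_inr] at h
    · exact congrArg Sum.inl (Subtype.ext h)
    · exact absurd (h ▸ x.2) (hwleaf t)
    · exact absurd (h.symm ▸ y.2) (hwleaf s)
    · exact congrArg Sum.inr (winj h)
  have hcard := Fintype.card_le_of_injective f hf
  rw [Fintype.card_sum] at hcard
  have hleaves : Fintype.card {v // T.IsLeaf v} = ∑ i, n i := by
    rw [Fintype.card_congr φ.toEquiv]
    simp
  have hcount : Fintype.card {i : Fin k // 2 ≤ n i} =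
      (Finset.univ.filter fun i : Fin k => 2 ≤ n i).card := Fintype.card_subtype _
  rw [hleaves, hcount] at hcard
  exact hcard
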